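/- Let A be a magma admitting a partition function f : A × A → A, i.e., f satisfies: f(f(a,b),c) = f(a,f(b,c)); f(a,a) = a; f(a,f(b,c)) = f(a,f(c,b)); f(a*b, c) = f(a,c) * f(b,c); f(c, a*b) = f(c, f(c,a) * f(c,b)); f(a*b, a) = a*b and f(a*b, b) = a*b; and f(a, a*a) = a. Then the binary relation a ~ b defined by f(a,b) = a and f(b,a) = b is an equivalence relation on A, and each equivalence class is closed under f in the sense that a ~ b implies f(a,c) ~ f(b,c) for all c. -/
import Mathlib

/-- for a magma with a partition function `f`, the relation
`a ~ b ↔ f a b = a ∧ f b a = b` is an equivalence relation, and it is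
compatible with `f`: `a ~ b` implies `f a c ~ f b c`. -/
theorem stmt_18 {A : Type*} (op : A → A → A) (f : A → A → A)
    (P1 : ∀ a b c : A, f (f a b) c = f a (f b c))
    (P2 : ∀ a : A, f a a = a)
    (P3 : ∀ a b c : A, f a (f b c) = f a (f c b))
    (P4 : ∀ a b c : A, f (op a b) c = op (f a c) (f b c))
    (P5 : ∀ a b c : A, f c (op a b) = f c (op (f c a) (f c b)))
    (P6 : ∀ a b : A, f (op a b) a = op a b ∧ f (op a b) b = op a b)
    (P7 : ∀ a : A, f a (op a a) = a) :
    Equivalence (fun a b : A => f a b = a ∧ f b a = b) ∧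
    ∀ a b c : A, (f a b = a ∧ f b a = b) →
      (f (f a c) (f b c) = f a c ∧ f (f b c) (f a c) = f b c) := by
  have key : ∀ x y c : A, f x y = x → f (f x c) (f y c) = f x c := by
    intro x y c hxy
    have h1 : f c (f y c) = f c y := by
      rw [P3, ← P1, P2]
    calc f (f x c) (f y c) = f x (f c (f y c)) := P1 _ _ _
      _ = f x (f c y) := by rw [h1]
      _ = f x (f y c) := P3 _ _ _
      _ = f (f x y) c := (P1 _ _ _).symm
      _ = f x c := by rw [hxy]
  constructor
  · constructor
    · intro a; exact ⟨P2 a, P2 a⟩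
    · intro a b ⟨h1, h2⟩; exact ⟨h2, h1⟩
    · intro a b c ⟨hab, hba⟩ ⟨hbc, hcb⟩
      constructor
      · calc f a c = f (f a b) c := by rw [hab]
          _ = f a (f b c) := P1 _ _ _
          _ = a := by rw [hbc, hab]
      · calc f c a = f (f c b) a := by rw [hcb]
          _ = f c (f b a) := P1 _ _ _
          _ = c := by rw [hba, hcb]
  · intro a b c ⟨hab, hba⟩
    exact ⟨key a b c hab, key b a c hba⟩
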